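/- Let K be a field with a valuation ν whose residue characteristic is not 2 (i.e., char K ≠ 2 and ν(2) = 0), let F be a subfield of K, let V be a K-vector space, m > 0, and let ω : V → ℝ ∪ {∞} satisfy (1) ω(x) = ∞ iff x = 0, (2) ω(x·l) = ω(x) + m·ν(l), and (3) ω(−x) = ω(x) and ω(x + y) ≥ min(ω(x), ω(y)); let d(x,y) := 2^{−ω(x−y)}. Let σ : V → V be an F-linear map with σ ∘ σ = id and ω(σ(x)) = ω(x) for all x ∈ V, and set V_σ := {v ∈ V : σ(v) = v}. If (V, d) satisfies (MC′), then the metric subspace (V_σ, d|_{V_σ}) satisfies (MC′). -/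

import Mathlib

/-- `2 ^ (-a)` for `a ∈ ℝ ∪ {∞}`, with the convention `2 ^ (-∞) = 0`. -/
noncomputable def toDist (a : WithTop ℝ) : ℝ :=
  WithTop.recTopCoe 0 (fun r : ℝ => (2 : ℝ) ^ (-r)) a

/-- Property (MC′) for a distance function `d` on `X`: every nested sequence of c-balls
(closed balls of positive radius) has nonempty intersection. -/
def MCprime {X : Type*} (d : X → X → ℝ) : Prop :=
  ∀ (c : ℕ → X) (r : ℕ → ℝ),
    (∀ n, 0 < r n) →
    (∀ n, {y | d (c (n + 1)) y ≤ r (n + 1)} ⊆ {y | d (c n) y ≤ r n}) →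
    (⋂ n, {y | d (c n) y ≤ r n}).Nonempty

/-- Property (MC′) for the metric subspace on `A ⊆ X` induced by `d`. -/
def MCprimeOn {X : Type*} (d : X → X → ℝ) (A : Set X) : Prop :=
  ∀ (c : ℕ → X) (r : ℕ → ℝ),
    (∀ n, c n ∈ A) → (∀ n, 0 < r n) →
    (∀ n, {y ∈ A | d (c (n + 1)) y ≤ r (n + 1)} ⊆ {y ∈ A | d (c n) y ≤ r n}) →
    (⋂ n, {y ∈ A | d (c n) y ≤ r n}).Nonempty

lemma toDist_top : toDist ⊤ = 0 := rfl

lemma toDist_coe (r : ℝ) : toDist (r : WithTop ℝ) = (2 : ℝ) ^ (-r) := rfl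

lemma toDist_anti {a b : WithTop ℝ} (h : a ≤ b) : toDist b ≤ toDist a := by
  induction a using WithTop.recTopCoe with
  | top =>
    have : b = ⊤ := top_le_iff.mp h
    simp [this]
  | coe s =>
    induction b using WithTop.recTopCoe with
    | top =>
      simpa [toDist_top, toDist_coe] using (Real.rpow_pos_of_pos (by norm_num) (-s)).le
    | coe t =>
      have hst : s ≤ t := by exact_mod_cast h
      simp only [toDist_coe]
      exact Real.rpow_le_rpow_left_iff (x := (2 : ℝ)) (by norm_num) |>.mpr (by linarith)

/-- Let `K` be a field with a valuation `ν` of residue characteristic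
different from 2, `F` a subfield of `K`, `V` a `K`-vector space with a valuation-like map
`ω` satisfying (1)–(3), and `σ : V → V` an `F`-linear involution preserving `ω`. If `(V, d)`
satisfies (MC′), then the metric subspace on `V_σ = {v | σ v = v}` satisfies (MC′). -/
theorem MCprime_fixed_subspace {K V : Type*} [Field K]
    [AddCommGroup V] [Module K V]
    (hchar : (2 : K) ≠ 0)
    (ν : K → WithTop ℝ)
    (hν1 : ∀ x : K, ν x = ⊤ ↔ x = 0)
    (hνmul : ∀ x y : K, ν (x * y) = ν x + ν y)
    (hνadd : ∀ x y : K, min (ν x) (ν y) ≤ ν (x + y))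
    (hν2 : ν (2 : K) = 0)
    (F : Subfield K)
    (m : ℝ) (hm : 0 < m)
    (ω : V → WithTop ℝ)
    (hω1 : ∀ x : V, ω x = ⊤ ↔ x = 0)
    (hω2 : ∀ (x : V) (l : K), ω (l • x) = ω x + (m : WithTop ℝ) * ν l)
    (hω3neg : ∀ x : V, ω (-x) = ω x)
    (hω3 : ∀ x y : V, min (ω x) (ω y) ≤ ω (x + y))
    (σ : V → V)
    (hσadd : ∀ x y : V, σ (x + y) = σ x + σ y)
    (hσsmul : ∀ c : K, c ∈ F → ∀ x : V, σ (c • x) = c • σ x)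
    (hσinv : ∀ x : V, σ (σ x) = x)
    (hσω : ∀ x : V, ω (σ x) = ω x)
    (hMC : MCprime (fun x y : V => toDist (ω (x - y)))) :
    MCprimeOn (fun x y : V => toDist (ω (x - y))) {v : V | σ v = v} := by
  intro c r hcA hr hnest
  set d : V → V → ℝ := fun x y : V => toDist (ω (x - y)) with hd
  -- basic facts about ν
  have hν1' : ν 1 = 0 := by
    have h := hνmul 1 1
    rw [one_mul] at h
    have hne : ν 1 ≠ ⊤ := fun h' => one_ne_zero ((hν1 1).mp h')
    lift ν 1 to ℝ using hne with t ht
    have ht2 : t = t + t := by exact_mod_cast h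
    have : t = 0 := by linarith
    rw [this]; rfl
  have hνinv2 : ν ((2 : K)⁻¹) = 0 := by
    have h := hνmul 2 (2 : K)⁻¹
    rw [mul_inv_cancel₀ hchar, hν1', hν2, zero_add] at h
    exact h.symm
  -- d basics
  have hdself : ∀ x : V, d x x = 0 := by
    intro x
    simp only [hd, sub_self, (hω1 0).mpr rfl, toDist_top]
  have hdsymm : ∀ x y : V, d x y = d y x := by
    intro x y
    simp only [hd]
    rw [← hω3neg (x - y), neg_sub]
  have hdultra : ∀ x y z : V, d x z ≤ max (d x y) (d y z) := by
    intro x y z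
    have h := hω3 (x - y) (y - z)
    rw [sub_add_sub_cancel] at h
    rcases min_cases (ω (x - y)) (ω (y - z)) with ⟨he, _⟩ | ⟨he, _⟩
    · rw [he] at h
      exact le_max_of_le_left (toDist_anti h)
    · rw [he] at h
      exact le_max_of_le_right (toDist_anti h)
  -- radii
  set R : ℕ → ℝ := fun n => Nat.rec (r 0) (fun n Rn => min Rn (r (n + 1))) n with hR
  have hR0 : R 0 = r 0 := rfl
  have hRsucc : ∀ n, R (n + 1) = min (R n) (r (n + 1)) := fun n => rfl
  have hRpos : ∀ n, 0 < R n := by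
    intro n
    induction n with
    | zero => exact hr 0
    | succ k ih => rw [hRsucc]; exact lt_min ih (hr (k + 1))
  have hRmono : ∀ n, R (n + 1) ≤ R n := fun n => by rw [hRsucc]; exact min_le_left _ _
  have hRle : ∀ n, R n ≤ r n := by
    intro n
    cases n with
    | zero => exact le_of_eq hR0
    | succ k => rw [hRsucc]; exact min_le_right _ _
  have hRge : ∀ (n : ℕ) (x : ℝ), (∀ k ≤ n, x ≤ r k) → x ≤ R n := by
    intro n
    induction n with
    | zero => intro x h; exact (hR0 ▸ h 0 le_rfl)
    | succ k ih =>
      intro x h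
      rw [hRsucc]
      exact le_min (ih x fun j hj => h j (hj.trans (Nat.le_succ k)))
        (h (k + 1) le_rfl)
  -- the chain of subspace balls
  have hsub : ∀ j n, j ≤ n →
      {y ∈ {v : V | σ v = v} | d (c n) y ≤ r n} ⊆
        {y ∈ {v : V | σ v = v} | d (c j) y ≤ r j} := by
    intro j n hjn
    induction n, hjn using Nat.le_induction with
    | base => exact fun _ h => h
    | succ n hjn ih => exact fun y hy => ih (hnest n hy)
  have hc_mem : ∀ k n, k ≤ n → d (c k) (c n) ≤ r k := by
    intro k n hkn
    exact (hsub k n hkn ⟨hcA n, (hdself (c n)) ▸ (hr n).le⟩).2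
  -- nested full balls with radii R
  have hdcc : ∀ n, d (c n) (c (n + 1)) ≤ R n := by
    intro n
    refine hRge n _ fun k hk => ?_
    calc d (c n) (c (n + 1)) ≤ max (d (c n) (c k)) (d (c k) (c (n + 1))) :=
          hdultra _ _ _
      _ ≤ r k := max_le ((hdsymm (c n) (c k)) ▸ hc_mem k n hk)
          (hc_mem k (n + 1) (hk.trans (Nat.le_succ n)))
  have hnest' : ∀ n, {y | d (c (n + 1)) y ≤ R (n + 1)} ⊆ {y | d (c n) y ≤ R n} := by
    intro n y hy
    calc d (c n) y ≤ max (d (c n) (c (n + 1))) (d (c (n + 1)) y) := hdultra _ _ _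
      _ ≤ R n := max_le (hdcc n) (le_trans hy (hRmono n))
  obtain ⟨x, hx⟩ := hMC c R hRpos hnest'
  simp only [Set.mem_iInter, Set.mem_setOf_eq] at hx
  -- the symmetrized point
  have h2F : (2 : K) ∈ F := by
    have := F.add_mem F.one_mem F.one_mem
    rwa [one_add_one_eq_two] at this
  set x' : V := (2 : K)⁻¹ • (x + σ x) with hx'
  have hσ0 : σ 0 = 0 := by
    have := hσadd 0 0
    rw [add_zero] at this
    exact right_eq_add.mp this
  have hσx' : σ x' = x' := by
    rw [hx', hσsmul _ (F.inv_mem h2F), hσadd, hσinv, add_comm]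
  have hkey : ∀ n, d (c n) x' ≤ d (c n) x := by
    intro n
    have hσsub : σ (c n - x) = c n - σ x := by
      have hneg : σ (-x) = -σ x := by
        have := hσadd x (-x)
        rw [add_neg_cancel, hσ0] at this
        exact (neg_eq_of_add_eq_zero_right this.symm).symm
      rw [sub_eq_add_neg, hσadd, hneg, hcA n, ← sub_eq_add_neg]
    have heq : c n - x' = (2 : K)⁻¹ • ((c n - x) + σ (c n - x)) := by
      rw [hσsub]
      have : (c n - x) + (c n - σ x) = (2 : K) • c n - (x + σ x) := by
        rw [two_smul]; abel
      rw [this, smul_sub, inv_smul_smul₀ hchar, hx']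
    have hωge : ω (c n - x) ≤ ω (c n - x') := by
      rw [heq, hω2, hνinv2, mul_zero, add_zero]
      have := hω3 (c n - x) (σ (c n - x))
      rwa [hσω, min_self] at this
    exact toDist_anti hωge
  refine ⟨x', ?_⟩
  simp only [Set.mem_iInter, Set.mem_sep_iff, Set.mem_setOf_eq]
  intro n
  exact ⟨hσx', le_trans (hkey n) (le_trans (hx n) (hRle n))⟩
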